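/- Let (X,d) be a geodesic metric space, Ω ⊂ X bounded, D ⊂ X nonempty, u continuous, u^d(y) := inf_{closure(Ω)} (u + d(·,y)). Suppose x ∈ R₁*(D,Ω,u), y ∈ D satisfy u(x) + d(x,y) = u^d(y), and γ : [0,1] → X is a geodesic with γ(0) = x, γ(1) = y. Then for every x' ∈ R₁*(D,Ω,u) lying on the image of γ, one has u(x') - u(x) = d(x',x). -/
import Mathlib


/-- If `x ∈ R₁*(D,Ω,u)`, `y ∈ D` with `u x + dist x y = u^d y`, and `γ` is a
constant-speed geodesic from `x` to `y`, then for every `x' ∈ R₁*(D,Ω,u)` on the image of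
`γ` one has `u x' - u x = dist x' x`. -/
theorem contact_set_along_geodesic {X : Type*} [MetricSpace X]
    (Ω D : Set X) (hΩ : Bornology.IsBounded Ω) (hD : D.Nonempty)
    (u : X → ℝ) (hu : Continuous u)
    (hbdd : ∀ y : X, BddBelow ((fun z => u z + dist z y) '' closure Ω))
    (ud : X → ℝ) (hud : ∀ y, ud y = sInf ((fun z => u z + dist z y) '' closure Ω))
    (x y : X)
    (hx : x ∈ {x | x ∈ closure Ω ∧ ∃ y' ∈ D, ud y' = u x + dist x y'})
    (hy : y ∈ D) (hxy : u x + dist x y = ud y)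
    (γ : ℝ → X) (hγ0 : γ 0 = x) (hγ1 : γ 1 = y)
    (hγ : ∀ s ∈ Set.Icc (0:ℝ) 1, ∀ t ∈ Set.Icc (0:ℝ) 1,
      dist (γ s) (γ t) = |s - t| * dist (γ 0) (γ 1)) :
    ∀ x' ∈ {x | x ∈ closure Ω ∧ ∃ y' ∈ D, ud y' = u x + dist x y'},
      (∃ t ∈ Set.Icc (0:ℝ) 1, x' = γ t) → u x' - u x = dist x' x := by

  rintro x' ⟨hx'Ω, y', hy'D, hy'⟩ ⟨t, htI, rfl⟩
  obtain ⟨ht0, ht1⟩ := htI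
  -- distances along geodesic
  have h01 : dist (γ 0) (γ 1) = dist x y := by rw [hγ0, hγ1]
  have hdx : dist (γ t) x = t * dist x y := by
    have h := hγ 0 ⟨le_refl 0, zero_le_one⟩ t ⟨ht0, ht1⟩
    rw [h01, hγ0] at h
    rw [dist_comm, h, abs_of_nonpos (by linarith), neg_sub, sub_zero]
  have hdy : dist (γ t) y = (1 - t) * dist x y := by
    have h := hγ t ⟨ht0, ht1⟩ 1 ⟨zero_le_one, le_refl 1⟩
    rw [h01, hγ1] at h
    rw [h, abs_of_nonpos (by linarith), neg_sub]
  have hsum : dist x (γ t) + dist (γ t) y = dist x y := by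
    rw [dist_comm x (γ t), hdx, hdy]; ring
  -- lower bound: u x + dist x y ≤ u (γ t) + dist (γ t) y
  have h1 : u x + dist x y ≤ u (γ t) + dist (γ t) y := by
    rw [hxy, hud y]
    exact csInf_le (hbdd y) ⟨γ t, hx'Ω, rfl⟩
  have hge : dist (γ t) x ≤ u (γ t) - u x := by
    rw [dist_comm]
    nlinarith [hsum]
  -- upper bound via y'
  have h2 : u (γ t) + dist (γ t) y' ≤ u x + dist x y' := by
    rw [← hy', hud y']
    exact csInf_le (hbdd y') ⟨x, hx.1, rfl⟩
  have h3 : dist x y' ≤ dist x (γ t) + dist (γ t) y' := dist_triangle _ _ _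
  have hle : u (γ t) - u x ≤ dist (γ t) x := by
    rw [dist_comm]; linarith
  linarith
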